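/- Let M' and M'' be two connected mixed multigraphs with the same underlying graph G, and let T be a spanning tree of G. Then wt_{M'}(C) = wt_{M''}(C) for every mixed cycle C of G if and only if wt_{M'}(C) = wt_{M''}(C) for every fundamental cycle C ∈ B_T(G); likewise, wt_{M'}(C) = conj(wt_{M''}(C)) for every mixed cycle C of G if and only if wt_{M'}(C) = conj(wt_{M''}(C)) for every fundamental cycle C ∈ B_T(G). -/

import Mathlib

open Complex Finset

noncomputable section

/-- The primitive sixth root of unity `ω = 1/2 + (√3/2)i`. -/
def omega6 : ℂ := ⟨1/2, Real.sqrt 3 / 2⟩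

/-- A loopless undirected multigraph with vertex type `V` and edge type `E`:
each edge has a pair of distinct endpoints. -/
structure Multigraph (V E : Type) where
  ends : E → Sym2 V
  loopless : ∀ e, ¬ (ends e).IsDiag

variable {V E : Type}

/-- A mixed multigraph with underlying multigraph `G`: each edge is either
unoriented (`none`) or oriented (`some (u, v)`, an arc from `u` to `v`),
the orientation is compatible with the endpoints, and there are no digons
(two parallel edges oriented in opposite directions). -/
structure MixedOrientation (G : Multigraph V E) where
  orient : E → Option (V × V)
  compat : ∀ e a b, orient e = some (a, b) → G.ends e = s(a, b)
  noDigon : ∀ e f a b, G.ends e = G.ends f → orient e = some (a, b) → orient f ≠ some (b, a)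

/-- The underlying graph of `G`, viewed as the mixed multigraph with no oriented edges. -/
def Multigraph.triv (G : Multigraph V E) : MixedOrientation G where
  orient := fun _ => none
  compat := fun _ _ _ h => by simp at h
  noDigon := fun _ _ _ _ _ h => by simp at h

variable [DecidableEq V]

/-- The contribution of edge `e`, traversed from `u` to `v`, to the Hermitian adjacency
matrix entry `N_{uv}` and to walk weights: `1` if `e` is unoriented, `ω` if `e` is an arc
from `u` to `v`, and `conj ω` if `e` is an arc from `v` to `u`. -/
def stepWeight {G : Multigraph V E} (M : MixedOrientation G) (e : E) (u v : V) : ℂ :=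
  match M.orient e with
  | none => 1
  | some (a, _) => if a = u then omega6 else (starRingEnd ℂ) omega6

/-- The Hermitian adjacency matrix `N(M)` of a mixed multigraph:
`N_{uv} = e{u,v} + e(u,v)·ω + e(v,u)·conj ω`. -/
def herm [Fintype V] [Fintype E] {G : Multigraph V E} (M : MixedOrientation G) :
    Matrix V V ℂ :=
  Matrix.of fun u v => ∑ e : E, if G.ends e = s(u, v) then stepWeight M e u v else 0

/-- A (mixed) cycle in the multigraph `G`: a cyclic sequence of `n ≥ 2` distinct vertices
joined by `n` distinct edges. -/
structure MixedCycle (G : Multigraph V E) where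
  n : ℕ
  two_le : 2 ≤ n
  vert : ZMod n → V
  edge : ZMod n → E
  vert_inj : Function.Injective vert
  edge_inj : Function.Injective edge
  ends_eq : ∀ i, G.ends (edge i) = s(vert i, vert (i + 1))

/-- The weight `wt(C) = ω^f · (conj ω)^b` of a mixed cycle `C` in `M`, traversed in
the direction given by its parametrization. -/
def cycleWeight {G : Multigraph V E} (M : MixedOrientation G) (C : MixedCycle G) : ℂ :=
  haveI : NeZero C.n := ⟨by have := C.two_le; omega⟩
  ∏ i : ZMod C.n, stepWeight M (C.edge i) (C.vert i) (C.vert (i + 1))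

/-- The value `ν(C) = wt(C) + conj (wt(C))` of a mixed cycle. -/
def nu {G : Multigraph V E} (M : MixedOrientation G) (C : MixedCycle G) : ℂ :=
  cycleWeight M C + (starRingEnd ℂ) (cycleWeight M C)

/-- The number of forward arcs of a mixed cycle (relative to its direction). -/
def fCount {G : Multigraph V E} (M : MixedOrientation G) (C : MixedCycle G) : ℕ :=
  haveI : NeZero C.n := ⟨by have := C.two_le; omega⟩
  (Finset.univ.filter fun i : ZMod C.n =>
    M.orient (C.edge i) = some (C.vert i, C.vert (i + 1))).card

/-- The number of backward arcs of a mixed cycle (relative to its direction). -/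
def bCount {G : Multigraph V E} (M : MixedOrientation G) (C : MixedCycle G) : ℕ :=
  haveI : NeZero C.n := ⟨by have := C.two_le; omega⟩
  (Finset.univ.filter fun i : ZMod C.n =>
    M.orient (C.edge i) = some (C.vert (i + 1), C.vert i)).card

/-- The edge set of a mixed cycle. -/
def cycleEdges [DecidableEq E] {G : Multigraph V E} (C : MixedCycle G) : Finset E :=
  haveI : NeZero C.n := ⟨by have := C.two_le; omega⟩
  Finset.image C.edge Finset.univ

/-- Reachability in `G` using only edges from the set `S`. -/
def ReachIn (G : Multigraph V E) (S : Set E) (u v : V) : Prop :=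
  Relation.ReflTransGen (fun x y => ∃ e ∈ S, G.ends e = s(x, y)) u v

/-- A multigraph is connected if every two vertices are joined by a walk. -/
def Multigraph.Connected (G : Multigraph V E) : Prop :=
  ∀ u v : V, ReachIn G Set.univ u v

/-- All entries of the diagonal `d` are sixth roots of unity `ω^i`, `0 ≤ i ≤ 5`. -/
def IsSixthRoots (d : V → ℂ) : Prop := ∀ v, ∃ i : ℕ, i ≤ 5 ∧ d v = omega6 ^ i

/-- `M''` is obtained from `M'` by a three-way switching: `N(M'') = D⁻¹ N(M') D` for
some diagonal matrix `D` whose diagonal entries are sixth roots of unity. -/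
def Switching [Fintype V] [Fintype E] {G : Multigraph V E}
    (M' M'' : MixedOrientation G) : Prop :=
  ∃ d : V → ℂ, IsSixthRoots d ∧
    herm M'' = (Matrix.diagonal d)⁻¹ * herm M' * Matrix.diagonal d

/-- `M'` is the converse of `M`: every arc of `M` is reversed. -/
def IsConverse {G : Multigraph V E} (M M' : MixedOrientation G) : Prop :=
  ∀ e, M'.orient e = Option.map Prod.swap (M.orient e)

/-- `M'` and `M''` are switching equivalent: one is obtained from the other by a
three-way switching and/or taking a converse. -/
def SwitchEquiv [Fintype V] [Fintype E] {G : Multigraph V E}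
    (M' M'' : MixedOrientation G) : Prop :=
  Switching M' M'' ∨ ∃ Mc : MixedOrientation G, IsConverse M' Mc ∧ Switching Mc M''

/-- `T` is (the edge set of) a spanning tree of `G`: it connects all vertices and
contains no cycle. -/
def IsSpanningTree (G : Multigraph V E) (T : Set E) : Prop :=
  (∀ u v : V, ReachIn G T u v) ∧ ∀ C : MixedCycle G, ¬ (∀ i, C.edge i ∈ T)

/-- `C` is a fundamental cycle with respect to the spanning tree `T`: it uses exactly
one non-tree edge. -/
def IsFundamentalCycle (G : Multigraph V E) (T : Set E) (C : MixedCycle G) : Prop :=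
  ∃ e, e ∉ T ∧ ∀ i, C.edge i = e ∨ C.edge i ∈ T

-- ===== auxiliary development =====

inductive GWalk (G : Multigraph V E) (S : Set E) : V → V → Type _
  | nil (u : V) : GWalk G S u u
  | cons {u x v : V} (e : E) (he : e ∈ S) (hends : G.ends e = s(u, x))
      (w : GWalk G S x v) : GWalk G S u v

namespace GWalk

variable {G : Multigraph V E} {S : Set E} (f : E → V → V → ℂ)

def length : ∀ {u v : V}, GWalk G S u v → ℕ
  | _, _, .nil _ => 0
  | _, _, .cons _ _ _ p => length p + 1

def wprod : ∀ {u v : V}, GWalk G S u v → ℂ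
  | _, _, .nil _ => 1
  | _, _, .cons (u := u) (x := x) e _ _ p => f e u x * wprod p

def vf : ∀ {u v : V}, GWalk G S u v → ℕ → V
  | _, _, .nil u, _ => u
  | _, _, .cons (u := u) _ _ _ _, 0 => u
  | _, _, .cons _ _ _ p, (i+1) => vf p i

def ef (d : E) : ∀ {u v : V}, GWalk G S u v → ℕ → E
  | _, _, .nil _, _ => d
  | _, _, .cons e _ _ _, 0 => e
  | _, _, .cons _ _ _ p, (i+1) => ef d p i

@[simp] lemma vf_zero : ∀ {u v : V} (w : GWalk G S u v), vf w 0 = u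
  | _, _, .nil _ => rfl
  | _, _, .cons _ _ _ _ => rfl

lemma vf_ge : ∀ {u v : V} (w : GWalk G S u v) (i : ℕ), w.length ≤ i → vf w i = v
  | _, _, .nil _, _, _ => rfl
  | _, _, .cons _ _ _ p, i+1, h => vf_ge p i (by simpa [length] using h)
  | _, _, .cons _ _ _ p, 0, h => by simp [length] at h

lemma ends_ef : ∀ {u v : V} (w : GWalk G S u v) (d : E) (i : ℕ), i < w.length →
    G.ends (ef d w i) = s(vf w i, vf w (i+1))
  | _, _, .cons e he hends p, d, 0, h => by
      cases p with
      | nil _ => simpa [ef, vf] using hends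
      | cons _ _ _ _ => simpa [ef, vf] using hends
  | _, _, .cons e he hends p, d, i+1, h =>
      ends_ef p d i (by simpa [length] using h)
  | _, _, .nil _, d, i, h => by simp [length] at h

lemma mem_ef : ∀ {u v : V} (w : GWalk G S u v) (d : E) (i : ℕ), i < w.length →
    ef d w i ∈ S
  | _, _, .cons e he hends p, d, 0, h => he
  | _, _, .cons e he hends p, d, i+1, h => mem_ef p d i (by simpa [length] using h)
  | _, _, .nil _, d, i, h => by simp [length] at h

lemma wprod_eq : ∀ {u v : V} (w : GWalk G S u v) (d : E),
    wprod f w = ∏ i : Fin w.length, f (ef d w i) (vf w i) (vf w (i+1))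
  | _, _, .nil _, d => by simp [wprod, length]; exact (Fin.prod_univ_zero _).symm
  | _, _, .cons (u := u) (x := x) e he hends p, d => by
      rw [wprod, wprod_eq p d]
      rw [show length (GWalk.cons e he hends p) = length p + 1 from rfl]
      rw [Fin.prod_univ_succ]
      have h0 : ∀ i : Fin (length p), f (ef d p i) (vf p i) (vf p (i+1)) =
          f (ef d (GWalk.cons (G := G) (S := S) e he hends p) i.succ)
            (vf (GWalk.cons (G := G) (S := S) e he hends p) i.succ)
            (vf (GWalk.cons (G := G) (S := S) e he hends p) (i.succ+1)) := fun i => rfl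
      rw [Finset.prod_congr rfl (fun i _ => h0 i)]
      congr 1
      simp [ef, vf]

def append : ∀ {u v z : V}, GWalk G S u v → GWalk G S v z → GWalk G S u z
  | _, _, _, .nil _, q => q
  | _, _, _, .cons e he hends p, q => .cons e he hends (append p q)

@[simp] lemma length_append : ∀ {u v z : V} (w : GWalk G S u v) (q : GWalk G S v z),
    (append w q).length = w.length + q.length
  | _, _, _, .nil _, q => by simp [append, length]
  | _, _, _, .cons e he hends p, q => by
      simp [append, length, length_append p q] <;> omega

@[simp] lemma wprod_append : ∀ {u v z : V} (w : GWalk G S u v) (q : GWalk G S v z),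
    wprod f (append w q) = wprod f w * wprod f q
  | _, _, _, .nil _, q => by simp [append, wprod]
  | _, _, _, .cons e he hends p, q => by
      simp [append, wprod, wprod_append p q]; ring

def reverse : ∀ {u v : V}, GWalk G S u v → GWalk G S v u
  | _, _, .nil u => .nil u
  | _, _, .cons e he hends p =>
      append (reverse p) (.cons e he (by rw [hends, Sym2.eq_swap]) (.nil _))

lemma wprod_reverse (hanti : ∀ e u v, G.ends e = s(u, v) → f e u v * f e v u = 1) :
    ∀ {u v : V} (w : GWalk G S u v), wprod f (reverse w) * wprod f w = 1
  | _, _, .nil _ => by simp [reverse, wprod]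
  | _, _, .cons (u := u) (x := x) e he hends p => by
      have ih := wprod_reverse hanti p
      have h1 := hanti e u x hends
      simp only [reverse, wprod_append, wprod]
      linear_combination (f e u x * f e x u) * ih + h1


lemma split (f : E → V → V → ℂ) :
    ∀ {u v : V} (w : GWalk G S u v) (i : ℕ), i ≤ w.length → ∀ {x : V}, vf w i = x →
    ∃ (w1 : GWalk G S u x) (w2 : GWalk G S x v), w1.length = i ∧ w2.length = w.length - i ∧
      wprod f w1 * wprod f w2 = wprod f w ∧ ∀ k, vf w2 k = vf w (i + k)
  | u, v, w, 0, _, x, hx => by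
      have h : u = x := by rw [← hx, vf_zero]
      subst h
      exact ⟨.nil u, w, rfl, by omega, by simp [wprod], fun k => by simp⟩
  | _, _, .nil u, i+1, h, x, hx => by simp [length] at h
  | u, v, .cons (x := y) e he hends p, i+1, h, x, hx => by
      obtain ⟨p1, p2, hl1, hl2, hp, hvf⟩ :=
        split f p i (by simpa [length] using h) (x := x) hx
      refine ⟨.cons e he hends p1, p2, by simp [length, hl1], by simp [length, hl2], ?_, ?_⟩
      · rw [show wprod f (GWalk.cons e he hends p1) = f e u y * wprod f p1 from rfl,
          show wprod f (GWalk.cons e he hends p) = f e u y * wprod f p from rfl, ← hp]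
        ring
      · intro k
        rw [show i+1+k = (i+k)+1 by omega]
        exact hvf k

lemma straighten (f : E → V → V → ℂ) :
    ∀ (n : ℕ) {a b : V} (w : GWalk G S a b), w.length ≤ n →
    ∃ p : GWalk G S a b, Function.Injective (fun i : Fin (p.length + 1) => p.vf i) := by
  intro n
  induction n using Nat.strong_induction_on with
  | _ n IH =>
  intro a b w hlen
  by_cases hinj : Function.Injective (fun i : Fin (w.length + 1) => w.vf i)
  · exact ⟨w, hinj⟩
  · obtain ⟨i, j, hij, hne⟩ := Function.not_injective_iff.mp hinj
    -- wlog i < j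
    have key : ∀ i j : Fin (w.length + 1), (i : ℕ) < (j : ℕ) → w.vf i = w.vf j →
        ∃ p : GWalk G S a b, Function.Injective (fun k : Fin (p.length + 1) => p.vf k) := by
      intro i j hlt hvij
      obtain ⟨w1, w2, hl1, hl2, _, hvf⟩ := split f w (i : ℕ) (by omega) (x := w.vf (j : ℕ)) hvij
      have h2 : vf w2 ((j : ℕ) - (i : ℕ)) = w.vf (j : ℕ) := by
        rw [hvf]; congr 1; omega
      obtain ⟨w2a, w2b, hl2a, hl2b, _, _⟩ :=
        split f w2 ((j : ℕ) - (i : ℕ)) (by omega) (x := w.vf (j : ℕ)) h2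
      have hlen' : (w1.append w2b).length ≤ n - 1 := by
        rw [length_append]
        have hj : (j : ℕ) ≤ w.length := by omega
        omega
      obtain ⟨p, hp⟩ := IH (n - 1) (by
        have : 1 ≤ n := by
          by_contra hc
          push_neg at hc
          interval_cases n
          omega
        omega) (w1.append w2b) hlen'
      exact ⟨p, hp⟩
    rcases lt_or_gt_of_ne hne with hlt | hlt
    · exact key i j hlt hij
    · exact key j i hlt hij.symm


lemma vf_succ_val {n : ℕ} (hn : 2 ≤ n) {u : V} (w : GWalk G S u u) (hlen : w.length = n)
    (i : ZMod n) :
    haveI : NeZero n := ⟨by omega⟩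
    w.vf (((i + 1 : ZMod n)).val) = w.vf ((i : ZMod n).val + 1) := by
  haveI : NeZero n := ⟨by omega⟩
  have hval : ((i + 1 : ZMod n)).val = ((i).val + 1) % n := by
    rw [ZMod.val_add, ZMod.val_one_eq_one_mod, Nat.mod_eq_of_lt (show 1 < n by omega)]
  rw [hval]
  rcases Nat.lt_or_ge ((i).val + 1) n with h | h
  · rw [Nat.mod_eq_of_lt h]
  · have hiv : (i).val < n := ZMod.val_lt i
    have : (i).val + 1 = n := by omega
    rw [this, Nat.mod_self, vf_zero, vf_ge w n (by omega)]

lemma wprod_closed (f : E → V → V → ℂ)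
    (hanti : ∀ e u v, G.ends e = s(u, v) → f e u v * f e v u = 1)
    (hT : ∀ C : MixedCycle G, ¬ (∀ i, C.edge i ∈ S)) :
    ∀ (n : ℕ) {u : V} (w : GWalk G S u u), w.length = n → wprod f w = 1 := by
  intro n
  induction n using Nat.strong_induction_on with
  | _ n IH =>
  intro u w hlen
  rcases Nat.eq_zero_or_pos n with hn0 | hn1
  · subst hn0
    cases w with
    | nil => simp [wprod]
    | cons e he h p => simp [length] at hlen
  · have hE : Nonempty E := by
      cases w with
      | nil => simp [length] at hlen; omega
      | cons e he h p => exact ⟨e⟩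
    obtain ⟨d⟩ := hE
    by_cases hinj : Function.Injective (fun i : Fin n => w.vf i)
    · -- all of v_0 .. v_{n-1} distinct
      have hv : ∀ a b : ℕ, a < n → b < n → w.vf a = w.vf b → a = b := by
        intro a b ha hb hab
        exact Fin.mk_eq_mk.mp (hinj (a₁ := ⟨a, ha⟩) (a₂ := ⟨b, hb⟩) hab)
      rcases Nat.lt_or_ge n 2 with hn2 | hn2
      · -- n = 1 : impossible, loop
        have hn1' : n = 1 := by omega
        have h0 : G.ends (ef d w 0) = s(w.vf 0, w.vf 1) := ends_ef w d 0 (by omega)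
        have h1 : w.vf 1 = u := vf_ge w 1 (by omega)
        have h2 : (w.vf 0) = u := vf_zero w
        rw [h1, h2] at h0
        exact absurd (h0 ▸ G.loopless (ef d w 0)) (by simp)
      · by_cases hdeg : n = 2 ∧ ef d w 0 = ef d w 1
        · -- backtrack of length 2
          obtain ⟨h2, hee⟩ := hdeg
          cases w with
          | nil => simp [length] at hlen; omega
          | cons e1 he1 hd1 p =>
            cases p with
            | nil => simp [length] at hlen; omega
            | cons e2 he2 hd2 q =>
              cases q with
              | cons e3 he3 hd3 r => simp [length] at hlen; omega
              | nil =>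
                have hee' : e1 = e2 := hee
                cases hee'
                have h1 := hanti e1 _ _ hd1
                simp only [wprod]
                linear_combination h1
        · -- build a cycle, contradiction
          haveI : NeZero n := ⟨by omega⟩
          have hvmod : ∀ i : ZMod n, w.vf (((i + 1 : ZMod n)).val) = w.vf ((i).val + 1) :=
            vf_succ_val hn2 w hlen
          have hends' : ∀ i : ZMod n, G.ends (ef d w (i).val) =
              s(w.vf (i).val, w.vf (((i + 1 : ZMod n)).val)) := by
            intro i
            rw [hvmod i]
            exact ends_ef w d (i).val (by rw [hlen]; exact ZMod.val_lt i)
          let hC : MixedCycle G := {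
            n := n
            two_le := hn2
            vert := fun i => w.vf (i).val
            edge := fun i => ef d w (i).val
            vert_inj := by
              intro i j hij
              have := hv (i).val (j).val (ZMod.val_lt i) (ZMod.val_lt j) hij
              exact ZMod.val_injective n this
            edge_inj := by
              intro i j hij
              have hei := hends' i
              have hej := hends' j
              replace hij : ef d w ((i : ZMod n)).val = ef d w ((j : ZMod n)).val := hij
              rw [hij] at hei
              rw [hej] at hei
              rw [Sym2.eq_iff] at hei
              have hmod : ∀ k : ZMod n, ((k + 1 : ZMod n)).val = ((k).val + 1) % n := by
                intro k
                rw [ZMod.val_add, ZMod.val_one_eq_one_mod,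
                  Nat.mod_eq_of_lt (show 1 < n by omega)]
              rcases hei with ⟨ha, _⟩ | ⟨ha, hb⟩
              · exact (ZMod.val_injective n (hv _ _ (ZMod.val_lt j) (ZMod.val_lt i) ha)).symm
              · -- ha : vf j = vf (i+1), hb : vf (j+1) = vf i
                have e1 : (j).val = ((i+1 : ZMod n)).val :=
                  hv _ _ (ZMod.val_lt j) (ZMod.val_lt _) ha
                have e2 : ((j+1 : ZMod n)).val = (i).val :=
                  hv _ _ (ZMod.val_lt _) (ZMod.val_lt i) hb
                rw [hmod i] at e1
                rw [hmod j] at e2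
                have hiv := ZMod.val_lt i
                have hjv := ZMod.val_lt j
                -- derive n = 2 ∧ i.val, j.val ∈ {0,1} or a contradiction
                rcases Nat.lt_or_ge ((i).val + 1) n with h1 | h1
                · rw [Nat.mod_eq_of_lt h1] at e1
                  rcases Nat.lt_or_ge ((j).val + 1) n with h2 | h2
                  · rw [Nat.mod_eq_of_lt h2] at e2
                    omega
                  · have hjn : (j).val + 1 = n := by omega
                    rw [hjn, Nat.mod_self] at e2
                    have hn2eq : n = 2 := by omega
                    have hi0 : (i).val = 0 := by omega
                    have hj1 : (j).val = 1 := by omega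
                    rw [hi0, hj1] at hij
                    exact absurd ⟨hn2eq, hij⟩ hdeg
                · have hin : (i).val + 1 = n := by omega
                  rw [hin, Nat.mod_self] at e1
                  have h01 : (0 + 1) % n = 1 := by
                    simp [Nat.mod_eq_of_lt (show 1 < n by omega)]
                  rw [e1, h01] at e2
                  have hn2eq : n = 2 := by omega
                  have hj0 : (j).val = 0 := by omega
                  have hi1 : (i).val = 1 := by omega
                  rw [hi1, hj0] at hij
                  exact absurd ⟨hn2eq, hij.symm⟩ hdeg
            ends_eq := hends' }
          exact absurd (fun i => mem_ef w d ((i : ZMod n)).val (by rw [hlen]; exact ZMod.val_lt i)) (hT hC)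
    · obtain ⟨i, j, hij, hne⟩ := Function.not_injective_iff.mp hinj
      have key : ∀ i j : Fin n, (i : ℕ) < (j : ℕ) → w.vf i = w.vf j → wprod f w = 1 := by
        intro i j hlt hvij
        obtain ⟨w1, w2, hl1, hl2, hp, hvf⟩ :=
          split f w (i : ℕ) (by omega) (x := w.vf (j : ℕ)) hvij
        have h2 : vf w2 ((j : ℕ) - (i : ℕ)) = w.vf (j : ℕ) := by
          rw [hvf]; congr 1; omega
        obtain ⟨w2a, w2b, hl2a, hl2b, hp2, _⟩ :=
          split f w2 ((j : ℕ) - (i : ℕ)) (by omega) (x := w.vf (j : ℕ)) h2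
        have hA : wprod f w2a = 1 := IH ((j : ℕ) - (i : ℕ)) (by omega) w2a hl2a
        have hB : wprod f (w1.append w2b) = 1 := by
          apply IH ((i : ℕ) + (w.length - (j : ℕ))) (by omega) (w1.append w2b)
          rw [length_append]; omega
        rw [wprod_append] at hB
        linear_combination (-1 : ℂ) * hp - wprod f w1 * hp2 +
          (wprod f w1 * wprod f w2b) * hA + hB
      rcases lt_or_gt_of_ne hne with hlt | hlt
      · exact key i j hlt hij
      · exact key j i hlt hij.symm

end GWalk

-- ===== end walks =====


-- ===== part 2 =====

lemma reach_toWalk {G : Multigraph V E} {S : Set E} {u v : V} (h : ReachIn G S u v) :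
    Nonempty (GWalk G S u v) := by
  induction h with
  | refl => exact ⟨.nil u⟩
  | tail hxy hstep ih =>
      obtain ⟨e, he, hends⟩ := hstep
      obtain ⟨w⟩ := ih
      exact ⟨w.append (.cons e he hends (.nil _))⟩

/-- product of `f` around a mixed cycle -/
def cprod (f : E → V → V → ℂ) {G : Multigraph V E} (C : MixedCycle G) : ℂ :=
  haveI : NeZero C.n := ⟨by have := C.two_le; omega⟩
  ∏ i : ZMod C.n, f (C.edge i) (C.vert i) (C.vert (i + 1))

lemma prod_zmod {n : ℕ} [NeZero n] (g : ZMod n → ℂ) :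
    ∏ i : ZMod n, g i = ∏ i : Fin n, g ((i : ℕ) : ZMod n) := by
  refine (Fintype.prod_bijective (fun i : Fin n => ((i : ℕ) : ZMod n)) ?_ _ _ (fun i => rfl)).symm
  rw [Fintype.bijective_iff_injective_and_card]
  constructor
  · intro i j hij
    replace hij : (((i : ℕ)) : ZMod n) = (((j : ℕ)) : ZMod n) := hij
    have h : (((i : ℕ) : ZMod n)).val = (((j : ℕ) : ZMod n)).val := by rw [hij]
    rw [ZMod.val_cast_of_lt i.isLt, ZMod.val_cast_of_lt j.isLt] at h
    exact Fin.ext h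
  · simp [ZMod.card]

lemma key_nontree {G : Multigraph V E} {T : Set E} (f : E → V → V → ℂ)
    (hfund : ∀ C : MixedCycle G, IsFundamentalCycle G T C → cprod f C = 1)
    {e : E} {u v : V} (he : e ∉ T) (hends : G.ends e = s(u, v))
    (p : GWalk G T v u)
    (hinj : Function.Injective fun i : Fin (p.length + 1) => p.vf i) :
    GWalk.wprod f p * f e u v = 1 := by
  have huv : u ≠ v := by
    intro h
    subst h
    exact G.loopless e (by rw [hends]; exact Sym2.mk_isDiag_iff.mpr rfl)
  have hk1 : 1 ≤ p.length := by
    cases p with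
    | nil => exact absurd rfl huv
    | cons e' he' h' q => simp [GWalk.length]
  set k := p.length with hk
  have hv : ∀ a b : ℕ, a ≤ k → b ≤ k → p.vf a = p.vf b → a = b := by
    intro a b ha hb hab
    exact Fin.mk_eq_mk.mp (hinj (a₁ := ⟨a, by omega⟩) (a₂ := ⟨b, by omega⟩) hab)
  haveI : NeZero (k + 1) := ⟨by omega⟩
  have hvalsucc : ∀ i : ZMod (k+1), ((i + 1 : ZMod (k+1))).val = ((i).val + 1) % (k+1) := by
    intro i
    rw [ZMod.val_add, ZMod.val_one_eq_one_mod, Nat.mod_eq_of_lt (show 1 < k+1 by omega)]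
  let C : MixedCycle G := {
    n := k + 1
    two_le := by omega
    vert := fun i => p.vf (i).val
    edge := fun i => if (i).val < k then GWalk.ef e p (i).val else e
    vert_inj := by
      intro i j h
      refine ZMod.val_injective _ (hv _ _ ?_ ?_ h)
      · have := ZMod.val_lt i; omega
      · have := ZMod.val_lt j; omega
    edge_inj := by
      intro i j h
      have hiv := ZMod.val_lt i
      have hjv := ZMod.val_lt j
      replace h : (if (i).val < k then GWalk.ef e p (i).val else e) =
          (if (j).val < k then GWalk.ef e p (j).val else e) := h
      by_cases hi : (i).val < k <;> by_cases hj : (j).val < k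
      · rw [if_pos hi, if_pos hj] at h
        have h1 := GWalk.ends_ef p e (i).val (by omega)
        have h2 := GWalk.ends_ef p e (j).val (by omega)
        rw [h, h2] at h1
        rw [Sym2.eq_iff] at h1
        rcases h1 with ⟨ha, _⟩ | ⟨ha, hb⟩
        · exact (ZMod.val_injective _ (hv _ _ (by omega) (by omega) ha)).symm
        · have e1 := hv _ _ (by omega) (by omega) ha
          have e2 := hv _ _ (by omega) (by omega) hb
          exfalso; omega
      · rw [if_pos hi, if_neg hj] at h
        exact absurd (h ▸ GWalk.mem_ef p e (i).val (by omega)) he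
      · rw [if_neg hi, if_pos hj] at h
        exact absurd (h.symm ▸ GWalk.mem_ef p e (j).val (by omega)) he
      · refine ZMod.val_injective _ ?_
        omega
    ends_eq := by
      intro i
      show G.ends (if (i).val < k then GWalk.ef e p (i).val else e) =
        s(p.vf (i).val, p.vf ((i + 1 : ZMod (k+1))).val)
      by_cases hi : (i).val < k
      · rw [if_pos hi, hvalsucc i, Nat.mod_eq_of_lt (by omega)]
        exact GWalk.ends_ef p e (i).val (by omega)
      · have hik : (i).val = k := by have := ZMod.val_lt i; omega
        rw [if_neg hi, hvalsucc i, hik, Nat.mod_self, GWalk.vf_zero, GWalk.vf_ge p k le_rfl]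
        exact hends }
  have hCfund : IsFundamentalCycle G T C := by
    refine ⟨e, he, fun i => ?_⟩
    by_cases hi : (i).val < k
    · right
      show (if (i).val < k then GWalk.ef e p (i).val else e) ∈ T
      rw [if_pos hi]
      exact GWalk.mem_ef p e _ (by omega)
    · left
      show (if (i).val < k then GWalk.ef e p (i).val else e) = e
      rw [if_neg hi]
  have heq : cprod f C = GWalk.wprod f p * f e u v := by
    rw [show cprod f C =
      ∏ i : ZMod (k+1), f (C.edge i) (C.vert i) (C.vert (i + 1)) from rfl]
    rw [prod_zmod (fun j : ZMod (k+1) => f (C.edge j) (C.vert j) (C.vert (j + 1)))]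
    rw [Fin.prod_univ_castSucc]
    congr 1
    · rw [GWalk.wprod_eq f p e]
      refine Finset.prod_congr rfl fun i _ => ?_
      have hvz : ((((i.castSucc : Fin (k+1)) : ℕ) : ZMod (k+1))).val = (i : ℕ) :=
        ZMod.val_cast_of_lt (by simpa using i.isLt.trans (Nat.lt_succ_self k))
      have hz1 : ((((i.castSucc : Fin (k+1)) : ℕ) : ZMod (k+1)) + 1).val = (i : ℕ) + 1 := by
        rw [hvalsucc, hvz, Nat.mod_eq_of_lt (by have := i.isLt; omega)]
      show f (if _ < k then GWalk.ef e p _ else e) (p.vf _) (p.vf _) = _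
      rw [hvz, hz1, if_pos i.isLt]
    · have hvz : ((((Fin.last k : Fin (k+1)) : ℕ) : ZMod (k+1))).val = k :=
        ZMod.val_cast_of_lt (by simp)
      have hz1 : ((((Fin.last k : Fin (k+1)) : ℕ) : ZMod (k+1)) + 1).val = 0 := by
        rw [hvalsucc, hvz, Nat.mod_self]
      show f (if _ < k then GWalk.ef e p _ else e) (p.vf _) (p.vf _) = f e u v
      rw [hvz, hz1, if_neg (lt_irrefl k), GWalk.vf_zero, GWalk.vf_ge p k le_rfl]
  have h1 := hfund C hCfund
  rw [heq] at h1
  exact h1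

lemma main_lemma {G : Multigraph V E} {T : Set E} (hT : IsSpanningTree G T)
    (f : E → V → V → ℂ)
    (hanti : ∀ e u v, G.ends e = s(u, v) → f e u v * f e v u = 1)
    (hfund : ∀ C : MixedCycle G, IsFundamentalCycle G T C → cprod f C = 1) :
    ∀ C : MixedCycle G, cprod f C = 1 := by
  intro C
  haveI : NeZero C.n := ⟨by have := C.two_le; omega⟩
  set r := C.vert 0 with hr
  have hw : ∀ v : V, Nonempty (GWalk G T r v) := fun v => reach_toWalk (hT.1 r v)
  let W : ∀ v : V, GWalk G T r v := fun v => Classical.choice (hw v)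
  let φ : V → ℂ := fun v => GWalk.wprod f (W v)
  have hclosed : ∀ (x : V) (w : GWalk G T x x), GWalk.wprod f w = 1 := fun x w =>
    GWalk.wprod_closed f hanti hT.2 w.length w rfl
  have hrev : ∀ (v : V), GWalk.wprod f (GWalk.reverse (W v)) * φ v = 1 := fun v =>
    GWalk.wprod_reverse f hanti (W v)
  have hφne : ∀ v, φ v ≠ 0 := fun v => right_ne_zero_of_mul_eq_one (hrev v)
  have KEY : ∀ e a b, G.ends e = s(a, b) → f e a b * φ a = φ b := by
    intro e a b hends
    have hRb := hrev b
    have hRbne : GWalk.wprod f (GWalk.reverse (W b)) ≠ 0 :=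
      left_ne_zero_of_mul_eq_one hRb
    by_cases heT : e ∈ T
    · have h1 : GWalk.wprod f
          (((W a).append (GWalk.cons e heT hends (GWalk.nil b))).append
            (GWalk.reverse (W b))) = 1 := hclosed r _
      rw [GWalk.wprod_append, GWalk.wprod_append] at h1
      apply mul_right_cancel₀ hRbne
      have h1' : GWalk.wprod f (W a) * (f e a b * 1) *
          GWalk.wprod f (GWalk.reverse (W b)) = 1 := by
        simpa [GWalk.wprod] using h1
      linear_combination h1' - hRb
    · obtain ⟨q⟩ := reach_toWalk (hT.1 b a)
      obtain ⟨p, hpinj⟩ := GWalk.straighten f q.length q le_rfl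
      have h3 : GWalk.wprod f p * f e a b = 1 := key_nontree f hfund heT hends p hpinj
      have hRa := hrev a
      have hRane : GWalk.wprod f (GWalk.reverse (W a)) ≠ 0 :=
        left_ne_zero_of_mul_eq_one hRa
      have hA : GWalk.wprod f (((W b).append p).append (GWalk.reverse (W a))) = 1 :=
        hclosed r _
      rw [GWalk.wprod_append, GWalk.wprod_append] at hA
      -- hA : φ b * P * Ra = 1, hRa : Ra * φ a = 1, h3 : P * f = 1
      have hφa : φ a = φ b * GWalk.wprod f p := by
        apply mul_left_cancel₀ hRane
        linear_combination hRa - hA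
      rw [hφa]
      linear_combination (φ b) * h3
  have hstep : ∀ i : ZMod C.n,
      f (C.edge i) (C.vert i) (C.vert (i + 1)) =
        φ (C.vert (i + 1)) * (φ (C.vert i))⁻¹ := by
    intro i
    have hk := KEY _ _ _ (C.ends_eq i)
    rw [← hk, mul_inv_cancel_right₀ (hφne (C.vert i))]
  have hcp : cprod f C = ∏ i : ZMod C.n, f (C.edge i) (C.vert i) (C.vert (i + 1)) := rfl
  rw [hcp, Finset.prod_congr rfl (fun i _ => hstep i), Finset.prod_mul_distrib,
    Finset.prod_inv_distrib]
  have hre : (∏ i : ZMod C.n, φ (C.vert (i + 1))) = ∏ i : ZMod C.n, φ (C.vert i) :=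
    Fintype.prod_equiv (Equiv.addRight (1 : ZMod C.n)) _ _ (fun i => rfl)
  rw [hre]
  exact mul_inv_cancel₀ (Finset.prod_ne_zero_iff.mpr fun i _ => hφne _)


-- ===== bridge =====

lemma omega6_mul_conj : omega6 * (starRingEnd ℂ) omega6 = 1 := by
  rw [Complex.mul_conj]
  have h : Complex.normSq omega6 = 1 := by
    rw [show omega6 = ⟨1/2, Real.sqrt 3 / 2⟩ from rfl, Complex.normSq_mk]
    have h3 : Real.sqrt 3 * Real.sqrt 3 = 3 := Real.mul_self_sqrt (by norm_num)
    field_simp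
    linarith
  rw [h]
  norm_num

lemma omega6_ne_zero : omega6 ≠ 0 := by
  intro h
  have : (omega6).re = 0 := by rw [h]; rfl
  rw [show (omega6).re = 1/2 from rfl] at this
  norm_num at this

lemma stepWeight_ne_zero {G : Multigraph V E} (M : MixedOrientation G) (e : E) (u v : V) :
    stepWeight M e u v ≠ 0 := by
  unfold stepWeight
  rcases h : M.orient e with _ | ⟨a, b⟩
  · exact one_ne_zero
  · dsimp only
    split
    · exact omega6_ne_zero
    · simpa using omega6_ne_zero

lemma stepWeight_anti {G : Multigraph V E} (M : MixedOrientation G) (e : E) (u v : V)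
    (h : G.ends e = s(u, v)) :
    stepWeight M e u v * stepWeight M e v u = 1 := by
  have huv : u ≠ v := by
    intro hh
    subst hh
    exact G.loopless e (by rw [h]; exact Sym2.mk_isDiag_iff.mpr rfl)
  unfold stepWeight
  rcases ho : M.orient e with _ | ⟨a, b⟩
  · simp
  · have hc := M.compat e a b ho
    rw [h, Sym2.eq_iff] at hc
    dsimp only
    rcases hc with ⟨ha, hb⟩ | ⟨ha, hb⟩ <;> subst ha <;> subst hb <;>
      simp only [if_pos rfl, if_neg huv, if_neg (Ne.symm huv)]
    · exact omega6_mul_conj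
    · rw [mul_comm]
      exact omega6_mul_conj

lemma cycleWeight_eq_cprod [Fintype V] [Fintype E] {G : Multigraph V E}
    (M : MixedOrientation G) (C : MixedCycle G) :
    cycleWeight M C = cprod (fun e u v => stepWeight M e u v) C := rfl

lemma cycleWeight_ne_zero [Fintype V] [Fintype E] {G : Multigraph V E}
    (M : MixedOrientation G) (C : MixedCycle G) :
    cycleWeight M C ≠ 0 := by
  haveI : NeZero C.n := ⟨by have := C.two_le; omega⟩
  rw [show cycleWeight M C =
    ∏ i : ZMod C.n, stepWeight M (C.edge i) (C.vert i) (C.vert (i + 1)) from rfl]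
  exact Finset.prod_ne_zero_iff.mpr fun i _ => stepWeight_ne_zero M _ _ _

lemma cprod_sigma [Fintype V] [Fintype E] {G : Multigraph V E}
    (M' M'' : MixedOrientation G) (σ : ℂ →+* ℂ) (C : MixedCycle G) :
    cprod (fun e u v => stepWeight M' e u v * (σ (stepWeight M'' e u v))⁻¹) C =
      cycleWeight M' C * (σ (cycleWeight M'' C))⁻¹ := by
  haveI : NeZero C.n := ⟨by have := C.two_le; omega⟩
  rw [show cprod (fun e u v => stepWeight M' e u v * (σ (stepWeight M'' e u v))⁻¹) C =
    ∏ i : ZMod C.n, (stepWeight M' (C.edge i) (C.vert i) (C.vert (i + 1)) *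
      (σ (stepWeight M'' (C.edge i) (C.vert i) (C.vert (i + 1))))⁻¹) from rfl]
  rw [Finset.prod_mul_distrib, Finset.prod_inv_distrib, ← map_prod]
  rw [show cycleWeight M' C =
    ∏ i : ZMod C.n, stepWeight M' (C.edge i) (C.vert i) (C.vert (i + 1)) from rfl]
  rw [show cycleWeight M'' C =
    ∏ i : ZMod C.n, stepWeight M'' (C.edge i) (C.vert i) (C.vert (i + 1)) from rfl]

lemma cprod_one_iff [Fintype V] [Fintype E] {G : Multigraph V E}
    (M' M'' : MixedOrientation G) (σ : ℂ →+* ℂ) (C : MixedCycle G) :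
    cprod (fun e u v => stepWeight M' e u v * (σ (stepWeight M'' e u v))⁻¹) C = 1 ↔
      cycleWeight M' C = σ (cycleWeight M'' C) := by
  rw [cprod_sigma]
  have hne : σ (cycleWeight M'' C) ≠ 0 := by
    intro h0
    exact cycleWeight_ne_zero M'' C (σ.injective (by rw [h0, map_zero]))
  exact mul_inv_eq_one₀ hne

lemma general_sigma [Fintype V] [Fintype E] {G : Multigraph V E}
    {T : Set E} (hT : IsSpanningTree G T)
    (M' M'' : MixedOrientation G) (σ : ℂ →+* ℂ)
    (h : ∀ C : MixedCycle G, IsFundamentalCycle G T C →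
      cycleWeight M' C = σ (cycleWeight M'' C)) :
    ∀ C : MixedCycle G, cycleWeight M' C = σ (cycleWeight M'' C) := by
  intro C
  set f : E → V → V → ℂ :=
    fun e u v => stepWeight M' e u v * (σ (stepWeight M'' e u v))⁻¹ with hf
  have hanti : ∀ e u v, G.ends e = s(u, v) → f e u v * f e v u = 1 := by
    intro e u v hends
    rw [hf]
    dsimp only
    have h1 := stepWeight_anti M' e u v hends
    have h2 := stepWeight_anti M'' e u v hends
    have h2' : σ (stepWeight M'' e u v) * σ (stepWeight M'' e v u) = 1 := by
      rw [← map_mul, h2, map_one]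
    rw [inv_eq_of_mul_eq_one_right h2', inv_eq_of_mul_eq_one_left h2']
    linear_combination (σ (stepWeight M'' e u v) * σ (stepWeight M'' e v u)) * h1 + h2'
  exact (cprod_one_iff M' M'' σ C).mp
    (main_lemma hT f hanti (fun C' hC' => (cprod_one_iff M' M'' σ C').mpr (h C' hC')) C)

/-- Remark: equality (resp. conjugacy) of weights on all mixed cycles is
equivalent to equality (resp. conjugacy) of weights on all fundamental cycles with
respect to a spanning tree. -/
theorem cycle_weights_iff_fundamental [Fintype V] [Fintype E] {G : Multigraph V E}
    (hconn : G.Connected) (T : Set E) (hT : IsSpanningTree G T)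
    (M' M'' : MixedOrientation G) :
    ((∀ C : MixedCycle G, cycleWeight M' C = cycleWeight M'' C) ↔
      (∀ C : MixedCycle G, IsFundamentalCycle G T C →
        cycleWeight M' C = cycleWeight M'' C)) ∧
    ((∀ C : MixedCycle G, cycleWeight M' C = (starRingEnd ℂ) (cycleWeight M'' C)) ↔
      (∀ C : MixedCycle G, IsFundamentalCycle G T C →
        cycleWeight M' C = (starRingEnd ℂ) (cycleWeight M'' C))) := by
  constructor
  · constructor
    · intro h C _
      exact h C
    · intro h C
      have := general_sigma hT M' M'' (RingHom.id ℂ)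
        (fun C' hC' => by simpa using h C' hC') C
      simpa using this
  · constructor
    · intro h C _
      exact h C
    · intro h C
      exact general_sigma hT M' M'' (starRingEnd ℂ) h C

end
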